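/- For all positive integers ℓ and n, the induced Ramsey number of two stars satisfies IR(K_{1,ℓ}, K_{1,n}) = n + ℓ. -/

import Mathlib

open SimpleGraph

def ArrowsInd {V α β : Type*} (F : SimpleGraph V) (H : SimpleGraph α) (G : SimpleGraph β) : Prop :=
  ∀ c : Sym2 V → Bool,
    (∃ f : H ↪g F, ∀ u v, H.Adj u v → c s(f u, f v) = true) ∨
    (∃ g : G ↪g F, ∀ u v, G.Adj u v → c s(g u, g v) = false)

noncomputable def IR {α β : Type*} (H : SimpleGraph α) (G : SimpleGraph β) : ℕ :=
  sInf {N : ℕ | ∃ F : SimpleGraph (Fin N), ArrowsInd F H G}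

def StarGraph (n : ℕ) : SimpleGraph (Fin 1 ⊕ Fin n) := completeBipartiteGraph (Fin 1) (Fin n)

/- ### Auxiliary machinery -/

open Finset

set_option linter.unusedSectionVars false
set_option linter.unusedVariables false

section ZHelp
variable {N : ℕ} [NeZero N]

/-- the "circular distance" between two elements of `ZMod N` -/
def dd (x y : ZMod N) : ℕ := min (x - y).val (y - x).val

/-- the pair `{v+j, v-j}` -/
def pairs (v : ZMod N) (j : ℕ) : Finset (ZMod N) := {v + (j : ZMod N), v - (j : ZMod N)}

lemma cast_val (x : ZMod N) : ((x.val : ℕ) : ZMod N) = x := ZMod.natCast_rightInverse x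

lemma val_pos_of_ne_zero {x : ZMod N} (h : x ≠ 0) : 1 ≤ x.val := by
  rcases Nat.eq_zero_or_pos x.val with h0 | h0
  · exact absurd ((ZMod.val_eq_zero x).mp h0) h
  · exact h0

lemma dd_spec (v u : ZMod N) (h : u ≠ v) :
    (u = v + (dd v u : ℕ) ∨ u = v - (dd v u : ℕ)) ∧ 1 ≤ dd v u ∧ 2 * dd v u ≤ N := by
  have hne : u - v ≠ 0 := sub_ne_zero.mpr h
  have hne' : v - u ≠ 0 := sub_ne_zero.mpr (Ne.symm h)
  have hvu : v - u = -(u - v) := by ring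
  have hnegval : (v - u).val = N - (u - v).val := by
    rw [hvu, ZMod.neg_val, if_neg hne]
  have h1 : 1 ≤ (u - v).val := val_pos_of_ne_zero hne
  have h2 : (u - v).val < N := ZMod.val_lt _
  have hdd : dd v u = min (N - (u - v).val) (u - v).val := by
    rw [dd, hnegval]
  rcases min_cases (N - (u - v).val) ((u - v).val) with ⟨hmin, hle⟩ | ⟨hmin, hle⟩
  · refine ⟨Or.inr ?_, by omega, by omega⟩
    rw [hdd, hmin, ← hnegval, cast_val]
    ring
  · refine ⟨Or.inl ?_, by omega, by omega⟩
    rw [hdd, hmin, cast_val]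
    ring

lemma mem_pairs_of_dd {v u : ZMod N} (h : u ≠ v) {lo hi : ℕ}
    (hlo : lo ≤ dd v u) (hhi : dd v u ≤ hi) :
    u ∈ (Icc lo hi).biUnion (pairs v) := by
  refine mem_biUnion.mpr ⟨dd v u, mem_Icc.mpr ⟨hlo, hhi⟩, ?_⟩
  rw [pairs, mem_insert, mem_singleton]
  rcases (dd_spec v u h).1 with h1 | h1
  · exact Or.inl h1
  · exact Or.inr h1

lemma card_biUnion_pairs (v : ZMod N) (lo hi : ℕ) :
    ((Icc lo hi).biUnion (pairs v)).card ≤ 2 * (hi + 1 - lo) := by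
  calc ((Icc lo hi).biUnion (pairs v)).card ≤ ∑ j ∈ Icc lo hi, (pairs v j).card :=
        card_biUnion_le
    _ ≤ (Icc lo hi).card * 2 := by
        apply Finset.sum_le_card_nsmul
        intro x _
        exact card_insert_le _ _ |>.trans (by simp)
    _ = 2 * (hi + 1 - lo) := by rw [Nat.card_Icc]; ring

lemma val_sub_one {x : ZMod N} (hx : x ≠ 0) : (x - 1).val = x.val - 1 := by
  have h1 : 1 ≤ x.val := val_pos_of_ne_zero hx
  have hlt : x.val - 1 < N := by have := ZMod.val_lt x; omega
  have : x - 1 = ((x.val - 1 : ℕ) : ZMod N) := by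
    rw [Nat.cast_sub h1, cast_val x, Nat.cast_one]
  rw [this, ZMod.val_cast_of_lt hlt]

lemma val_neg_one (hN : 1 ≤ N) : (-1 : ZMod N).val = N - 1 := by
  have : (-1 : ZMod N) = ((N - 1 : ℕ) : ZMod N) := by
    rw [Nat.cast_sub hN, ZMod.natCast_self, Nat.cast_one, zero_sub]
  rw [this, ZMod.val_cast_of_lt (by omega)]

lemma eq_pm_one {v u : ZMod N} (h : u ≠ v) (h1 : dd v u = 1) : u = v + 1 ∨ u = v - 1 := by
  have := (dd_spec v u h).1
  rw [h1] at this
  simpa using this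
end ZHelp

/-- Criterion at color `t` preventing monochromatic induced stars with `k` leaves. -/
def Crit {V : Type*} [DecidableEq V] (F : SimpleGraph V) (c : Sym2 V → Bool) (t : Bool) (k : ℕ) : Prop :=
  ∀ v, ∃ S : Finset V,
    (∀ u, F.Adj v u → c s(v, u) = t → u ∈ S) ∧
    (S.card < k ∨ (S.card ≤ k ∧ ∃ x ∈ S, ∃ y ∈ S, F.Adj x y))

lemma crit_no_embed {V : Type*} [DecidableEq V] {F : SimpleGraph V} {c : Sym2 V → Bool}
    {t : Bool} {k : ℕ} (h : Crit F c t k) :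
    ¬ ∃ f : StarGraph k ↪g F, ∀ u w, (StarGraph k).Adj u w → c s(f u, f w) = t := by
  rintro ⟨f, hf⟩
  obtain ⟨S, hcov, hcase⟩ := h (f (Sum.inl 0))
  set g : Fin k → V := fun i => f (Sum.inr i) with hg
  have hginj : Function.Injective g := by
    intro i j hij
    have := f.injective hij
    exact Sum.inr_injective this
  have hadj : ∀ i : Fin k, (StarGraph k).Adj (Sum.inl 0) (Sum.inr i) := by
    intro i; simp [StarGraph]
  have hmem : ∀ i, g i ∈ S := by
    intro i
    exact hcov _ (f.map_rel_iff.mpr (hadj i)) (hf _ _ (hadj i))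
  have hsub : Finset.image g Finset.univ ⊆ S := by
    intro x hx
    obtain ⟨i, _, rfl⟩ := Finset.mem_image.mp hx
    exact hmem i
  have hcard : (Finset.image g Finset.univ).card = k := by
    rw [Finset.card_image_of_injective _ hginj, Finset.card_univ, Fintype.card_fin]
  rcases hcase with hlt | ⟨hle, x, hx, y, hy, hxy⟩
  · have := Finset.card_le_card hsub
    omega
  · have heq : Finset.image g Finset.univ = S :=
      Finset.eq_of_subset_of_card_le hsub (by omega)
    rw [← heq] at hx hy
    obtain ⟨i, _, rfl⟩ := Finset.mem_image.mp hx
    obtain ⟨j, _, rfl⟩ := Finset.mem_image.mp hy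
    have : (StarGraph k).Adj (Sum.inr i) (Sum.inr j) := f.map_rel_iff.mp hxy
    simp [StarGraph] at this

lemma crit_not_arrows {V : Type*} [DecidableEq V] {F : SimpleGraph V} {c : Sym2 V → Bool}
    {k l : ℕ} (h1 : Crit F c true k) (h2 : Crit F c false l) :
    ¬ ArrowsInd F (StarGraph k) (StarGraph l) := by
  intro h
  rcases h c with hr | hb
  · exact crit_no_embed h1 hr
  · exact crit_no_embed h2 hb

lemma arrows_swap {V α β : Type*} {F : SimpleGraph V} {H : SimpleGraph α} {G : SimpleGraph β}
    (h : ArrowsInd F H G) : ArrowsInd F G H := by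
  intro c
  rcases h (fun e => !(c e)) with ⟨f, hf⟩ | ⟨g, hg⟩
  · right; exact ⟨f, fun u v huv => by simpa using hf u v huv⟩
  · left; exact ⟨g, fun u v huv => by simpa using hg u v huv⟩

lemma arrows_map {V W α β : Type*} (f : V ↪ W) {F : SimpleGraph V} {H : SimpleGraph α}
    {G : SimpleGraph β} (h : ArrowsInd F H G) : ArrowsInd (F.map f) H G := by
  intro c
  let emb : F ↪g F.map f := ⟨f, by intro a b; exact SimpleGraph.map_adj_apply⟩
  rcases h (fun e => c (e.map f)) with ⟨f0, hf0⟩ | ⟨g0, hg0⟩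
  · left
    refine ⟨emb.comp f0, fun u v huv => ?_⟩
    have := hf0 u v huv
    simp only [Sym2.map_pair_eq] at this
    have hco : ∀ x, (emb.comp f0) x = f (f0 x) := fun _ => rfl
    rw [hco, hco]
    exact this
  · right
    refine ⟨emb.comp g0, fun u v huv => ?_⟩
    have := hg0 u v huv
    simp only [Sym2.map_pair_eq] at this
    have hco : ∀ x, (emb.comp g0) x = f (g0 x) := fun _ => rfl
    rw [hco, hco]
    exact this

/-- A trivial criterion: if the number of vertices is at most `k`. -/
lemma crit_of_card {V : Type*} [DecidableEq V] [Fintype V] (F : SimpleGraph V)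
    (c : Sym2 V → Bool) (t : Bool) (k : ℕ) (hk : Fintype.card V ≤ k) : Crit F c t k := by
  intro v
  refine ⟨Finset.univ.erase v, fun u hadj _ => mem_erase.mpr ⟨hadj.ne', mem_univ _⟩, Or.inl ?_⟩
  have hpos : 0 < Fintype.card V := Fintype.card_pos_iff.mpr ⟨v⟩
  rw [card_erase_of_mem (mem_univ _), card_univ]
  omega

/- ### The colorings for the lower bound -/

section CaseA
variable {N p q : ℕ} [NeZero N]

def cA (p : ℕ) : Sym2 (ZMod N) → Bool :=
  Sym2.lift ⟨fun x y => decide (dd x y ≤ p), by intro x y; simp [dd, min_comm]⟩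

lemma caseA_red (hN : N = 2*p+2*q+1) (F : SimpleGraph (ZMod N)) :
    Crit F (cA p) true (2*p+1) := by
  intro v
  refine ⟨(Icc 1 p).biUnion (pairs v), fun u hadj hc => ?_, Or.inl ?_⟩
  · have hne : u ≠ v := fun h => F.irrefl (v := v) (h ▸ hadj)
    have hd : dd v u ≤ p := by simpa [cA] using hc
    exact mem_pairs_of_dd hne (dd_spec v u hne).2.1 hd
  · have := card_biUnion_pairs v 1 p
    omega

lemma caseA_blue (hN : N = 2*p+2*q+1) (F : SimpleGraph (ZMod N)) :
    Crit F (cA p) false (2*q+1) := by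
  intro v
  refine ⟨(Icc (p+1) (p+q)).biUnion (pairs v), fun u hadj hc => ?_, Or.inl ?_⟩
  · have hne : u ≠ v := fun h => F.irrefl (v := v) (h ▸ hadj)
    have hd : p < dd v u := by simpa [cA] using hc
    have h2 := (dd_spec v u hne).2.2
    exact mem_pairs_of_dd hne (by omega) (by omega)
  · have := card_biUnion_pairs v (p+1) (p+q)
    omega
end CaseA

section CaseB
variable {N p q : ℕ} [NeZero N]

def cB (p q : ℕ) : Sym2 (ZMod N) → Bool :=
  Sym2.lift ⟨fun x y => decide (dd x y ≤ p ∨ dd x y = p + q + 1), by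
    intro x y; simp [dd, min_comm]⟩

lemma caseB_red (hN : N = 2*p+2*q+2) (F : SimpleGraph (ZMod N)) :
    Crit F (cB p q) true (2*p+2) := by
  intro v
  have hhalf : ((p+q+1 : ℕ) : ZMod N) + ((p+q+1 : ℕ) : ZMod N) = 0 := by
    rw [← Nat.cast_add, show (p+q+1) + (p+q+1) = N by omega]
    exact ZMod.natCast_self N
  have hneg : v - ((p+q+1 : ℕ) : ZMod N) = v + ((p+q+1 : ℕ) : ZMod N) := by
    rw [sub_eq_add_neg, neg_eq_of_add_eq_zero_right hhalf]
  refine ⟨insert (v + ((p+q+1 : ℕ) : ZMod N)) ((Icc 1 p).biUnion (pairs v)),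
    fun u hadj hc => ?_, Or.inl ?_⟩
  · have hne : u ≠ v := fun h => F.irrefl (v := v) (h ▸ hadj)
    have hd : dd v u ≤ p ∨ dd v u = p + q + 1 := by simpa [cB] using hc
    rcases hd with hd | hd
    · exact mem_insert_of_mem (mem_pairs_of_dd hne (dd_spec v u hne).2.1 hd)
    · rcases (dd_spec v u hne).1 with h1 | h1
      · rw [hd] at h1; exact h1 ▸ mem_insert_self _ _
      · rw [hd, hneg] at h1; exact h1 ▸ mem_insert_self _ _
  · have := card_biUnion_pairs v 1 p
    have := card_insert_le (v + ((p+q+1 : ℕ) : ZMod N)) ((Icc 1 p).biUnion (pairs v))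
    omega

lemma caseB_blue (hN : N = 2*p+2*q+2) (F : SimpleGraph (ZMod N)) :
    Crit F (cB p q) false (2*q+1) := by
  intro v
  refine ⟨(Icc (p+1) (p+q)).biUnion (pairs v), fun u hadj hc => ?_, Or.inl ?_⟩
  · have hne : u ≠ v := fun h => F.irrefl (v := v) (h ▸ hadj)
    have hd : p < dd v u ∧ ¬ dd v u = p + q + 1 := by
      have h' := hc
      simp only [cB, Sym2.lift_mk, decide_eq_false_iff_not] at h'
      push_neg at h'
      exact ⟨by omega, h'.2⟩
    have h2 := (dd_spec v u hne).2.2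
    exact mem_pairs_of_dd hne (by omega) (by omega)
  · have := card_biUnion_pairs v (p+1) (p+q)
    omega
end CaseB

section CaseC
variable {N p q : ℕ} [NeZero N]

/-- coloring for the case `a = 2p+1`, `b = 2q+1`, `N = 2p+2q+3`; `t` marks the cycle cut. -/
def cC (p q : ℕ) (t : ZMod N) : Sym2 (ZMod N) → Bool :=
  Sym2.lift ⟨fun x y => decide ((y = x + 1 ∧ Odd ((x - t).val)) ∨ (x = y + 1 ∧ Odd ((y - t).val))
      ∨ (q + 2 ≤ dd x y ∧ dd x y ≤ p + q + 1)), by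
    intro x y
    simp only [decide_eq_decide, dd, min_comm]
    exact decide_eq_decide.mpr (by tauto)⟩

lemma cC_true {t x y : ZMod N} (h : cC p q t s(x, y) = true) :
    (y = x + 1 ∧ Odd ((x - t).val)) ∨ (x = y + 1 ∧ Odd ((y - t).val))
      ∨ (q + 2 ≤ dd x y ∧ dd x y ≤ p + q + 1) := by
  simpa [cC] using h

lemma cC_false {t x y : ZMod N} (h : cC p q t s(x, y) = false) :
    ¬((y = x + 1 ∧ Odd ((x - t).val)) ∨ (x = y + 1 ∧ Odd ((y - t).val))
      ∨ (q + 2 ≤ dd x y ∧ dd x y ≤ p + q + 1)) := by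
  intro hP
  rw [show cC p q t s(x,y) = true from by simpa [cC] using hP] at h
  cases h

lemma caseC_red (hN : N = 2*p+2*q+3) (t : ZMod N) (F : SimpleGraph (ZMod N)) :
    Crit F (cC p q t) true (2*p+2) := by
  intro v
  set wr : ZMod N := if Odd ((v - t).val) then v + 1 else v - 1 with hwr
  refine ⟨insert wr ((Icc (q+2) (p+q+1)).biUnion (pairs v)), fun u hadj hc => ?_, Or.inl ?_⟩
  · have hne : u ≠ v := fun h => F.irrefl (v := v) (h ▸ hadj)
    rcases cC_true hc with ⟨h1, h2⟩ | ⟨h1, h2⟩ | ⟨h1, h2⟩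
    · rw [hwr, if_pos h2]; exact h1 ▸ mem_insert_self _ _
    · have hu : u = v - 1 := by rw [h1]; ring
      by_cases hvt : v = t
      · exfalso
        have hval : u - t = -1 := by rw [hu, hvt]; ring
        rw [hval, val_neg_one (by omega)] at h2
        obtain ⟨k, hk⟩ := h2
        omega
      · have hvt0 : v - t ≠ 0 := sub_ne_zero.mpr hvt
        have hval : (u - t).val = (v - t).val - 1 := by
          rw [show u - t = (v - t) - 1 by rw [hu]; ring]
          exact val_sub_one hvt0
        have hpos : 1 ≤ (v - t).val := val_pos_of_ne_zero hvt0
        have heven : ¬ Odd ((v - t).val) := by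
          rw [hval] at h2
          rcases h2 with ⟨k, hk⟩
          rintro ⟨m, hm⟩
          omega
        rw [hwr, if_neg heven]
        exact hu ▸ mem_insert_self _ _
    · exact mem_insert_of_mem (mem_pairs_of_dd hne (by omega) h2)
  · have := card_biUnion_pairs v (q+2) (p+q+1)
    have := card_insert_le wr ((Icc (q+2) (p+q+1)).biUnion (pairs v))
    omega

lemma caseC_blue (hN : N = 2*p+2*q+3) (t : ZMod N) (F : SimpleGraph (ZMod N))
    (ht : ¬ F.Adj t (t+1) ∨ (∀ x, F.Adj x (x+1)))
    (hpq : q = 0 → p = 0) :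
    Crit F (cC p q t) false (2*q+2) := by
  intro v
  have key : ∀ u, F.Adj v u → cC p q t s(v, u) = false → u ≠ v ∧ dd v u ≤ q + 1 := by
    intro u hadj hc
    have hne : u ≠ v := fun h => F.irrefl (v := v) (h ▸ hadj)
    have hnP := cC_false (p := p) (q := q) hc
    push_neg at hnP
    have h2 := (dd_spec v u hne).2.2
    have h1 := (dd_spec v u hne).2.1
    refine ⟨hne, ?_⟩
    by_cases hor : q + 2 ≤ dd v u
    · have := hnP.2.2 hor; omega
    · omega
  by_cases hv : v = t
  · subst hv
    rcases ht with hC1 | hC2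
    · refine ⟨insert (v - 1) ((Icc 2 (q+1)).biUnion (pairs v)), fun u hadj hc => ?_, Or.inl ?_⟩
      · obtain ⟨hne, hle⟩ := key u hadj hc
        have h1 := (dd_spec v u hne).2.1
        by_cases hd1 : dd v u = 1
        · rcases eq_pm_one hne hd1 with hu | hu
          · exact absurd (hu ▸ hadj) hC1
          · exact hu ▸ mem_insert_self _ _
        · exact mem_insert_of_mem (mem_pairs_of_dd hne (by omega) hle)
      · have := card_biUnion_pairs v 2 (q+1)
        have := card_insert_le (v - 1) ((Icc 2 (q+1)).biUnion (pairs v))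
        omega
    · refine ⟨(Icc 1 (q+1)).biUnion (pairs v), fun u hadj hc => ?_, Or.inr ⟨?_, ?_⟩⟩
      · obtain ⟨hne, hle⟩ := key u hadj hc
        exact mem_pairs_of_dd hne (dd_spec v u hne).2.1 hle
      · have := card_biUnion_pairs v 1 (q+1)
        omega
      · refine ⟨v + ((1:ℕ) : ZMod N), ?_, ?_⟩
        · exact mem_biUnion.mpr ⟨1, mem_Icc.mpr ⟨le_refl _, by omega⟩, mem_insert_self _ _⟩
        · have e1 : v + ((1:ℕ) : ZMod N) = v + 1 := by norm_num
          by_cases hq : 1 ≤ q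
          · refine ⟨v + ((2:ℕ) : ZMod N), ?_, ?_⟩
            · exact mem_biUnion.mpr ⟨2, mem_Icc.mpr ⟨by omega, by omega⟩, mem_insert_self _ _⟩
            · have e2 : v + ((2:ℕ) : ZMod N) = (v + 1) + 1 := by push_cast; ring
              rw [e1, e2]
              exact hC2 (v + 1)
          · have hp0 : p = 0 := hpq (by omega)
            have hN3 : N = 3 := by omega
            refine ⟨v - ((1:ℕ) : ZMod N), ?_, ?_⟩
            · exact mem_biUnion.mpr ⟨1, mem_Icc.mpr ⟨le_refl _, by omega⟩,
                mem_insert_of_mem (mem_singleton_self _)⟩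
            · have h3 : (3 : ZMod N) = 0 := by
                rw [show (3 : ZMod N) = ((3:ℕ) : ZMod N) by push_cast; ring,
                  show (3:ℕ) = N by omega, ZMod.natCast_self]
              have e2 : v - ((1:ℕ) : ZMod N) = (v + 1) + 1 := by
                push_cast
                linear_combination -h3
              rw [e1, e2]
              exact hC2 (v + 1)
  · set wb : ZMod N := if Odd ((v - t).val) then v - 1 else v + 1 with hwb
    refine ⟨insert wb ((Icc 2 (q+1)).biUnion (pairs v)), fun u hadj hc => ?_, Or.inl ?_⟩
    · obtain ⟨hne, hle⟩ := key u hadj hc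
      have hnP := cC_false (p := p) (q := q) hc
      push_neg at hnP
      have h1 := (dd_spec v u hne).2.1
      by_cases hd1 : dd v u = 1
      · have hvt0 : v - t ≠ 0 := sub_ne_zero.mpr hv
        have hpos : 1 ≤ (v - t).val := val_pos_of_ne_zero hvt0
        rcases eq_pm_one hne hd1 with hu | hu
        · have hno : ¬ Odd ((v - t).val) := hnP.1 hu
          rw [hwb, if_neg hno]
          exact hu ▸ mem_insert_self _ _
        · have hveq : v = u + 1 := by rw [hu]; ring
          have hno := hnP.2.1 hveq
          have hval : (u - t).val = (v - t).val - 1 := by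
            rw [show u - t = (v - t) - 1 by rw [hu]; ring]
            exact val_sub_one hvt0
          rw [hval] at hno
          rcases Nat.even_or_odd ((v - t).val) with he | ho
          · exfalso
            apply hno
            obtain ⟨k, hk⟩ := he
            exact ⟨k - 1, by omega⟩
          · rw [hwb, if_pos ho]
            exact hu ▸ mem_insert_self _ _
      · exact mem_insert_of_mem (mem_pairs_of_dd hne (by omega) hle)
    · have := card_biUnion_pairs v 2 (q+1)
      have := card_insert_le wb ((Icc 2 (q+1)).biUnion (pairs v))
      omega
end CaseC

/- ### The main lower-bound lemma -/

lemma main_lower (a b : ℕ) (F : SimpleGraph (ZMod (a+b+1))) :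
    ¬ ArrowsInd F (StarGraph (a+1)) (StarGraph (b+1)) := by
  have hNZ : NeZero (a+b+1) := ⟨Nat.succ_ne_zero _⟩
  have hcard : Fintype.card (ZMod (a+b+1)) = a+b+1 := ZMod.card _
  rcases Nat.eq_zero_or_pos a with ha0 | ha
  · subst ha0
    refine crit_not_arrows (c := fun _ => false)
      (fun v => ⟨∅, fun u _ hc => by simp at hc, Or.inl (by simp)⟩) ?_
    exact crit_of_card F _ false (b+1) (by omega)
  rcases Nat.eq_zero_or_pos b with hb0 | hb
  · subst hb0
    refine crit_not_arrows (c := fun _ => true) (crit_of_card F _ true (a+1) (by omega)) ?_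
    exact fun v => ⟨∅, fun u _ hc => by simp at hc, Or.inl (by simp)⟩
  rcases Nat.even_or_odd a with ⟨p, hp⟩ | ⟨p, hp⟩ <;> rcases Nat.even_or_odd b with ⟨q, hq⟩ | ⟨q, hq⟩
  · -- both even
    rw [show a + 1 = 2*p+1 by omega, show b + 1 = 2*q+1 by omega]
    exact crit_not_arrows (caseA_red (p := p) (q := q) (by omega) F)
      (caseA_blue (p := p) (q := q) (by omega) F)
  · -- a even, b odd : swap
    intro h
    have h2 := arrows_swap h
    rw [show b + 1 = 2*q+2 by omega, show a + 1 = 2*p+1 by omega] at h2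
    exact crit_not_arrows (caseB_red (p := q) (q := p) (by omega) F)
      (caseB_blue (p := q) (q := p) (by omega) F) h2
  · -- a odd, b even
    rw [show a + 1 = 2*p+2 by omega, show b + 1 = 2*q+1 by omega]
    exact crit_not_arrows (caseB_red (p := p) (q := q) (by omega) F)
      (caseB_blue (p := p) (q := q) (by omega) F)
  · -- both odd
    by_cases hpq : q = 0 → p = 0
    · rw [show a + 1 = 2*p+2 by omega, show b + 1 = 2*q+2 by omega]
      by_cases hA : ∀ x : ZMod (a+b+1), F.Adj x (x+1)
      · exact crit_not_arrows (caseC_red (by omega) 0 F)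
          (caseC_blue (by omega) 0 F (Or.inr hA) hpq)
      · push_neg at hA
        obtain ⟨t, htn⟩ := hA
        exact crit_not_arrows (caseC_red (by omega) t F)
          (caseC_blue (by omega) t F (Or.inl htn) hpq)
    · push_neg at hpq
      intro h
      have h2 := arrows_swap h
      rw [show b + 1 = 2*q+2 by omega, show a + 1 = 2*p+2 by omega] at h2
      have hqp : p = 0 → q = 0 := fun hh => absurd hh hpq.2
      by_cases hA : ∀ x : ZMod (a+b+1), F.Adj x (x+1)
      · exact crit_not_arrows (caseC_red (p := q) (q := p) (by omega) 0 F)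
          (caseC_blue (p := q) (q := p) (by omega) 0 F (Or.inr hA) hqp) h2
      · push_neg at hA
        obtain ⟨t, htn⟩ := hA
        exact crit_not_arrows (caseC_red (p := q) (q := p) (by omega) t F)
          (caseC_blue (p := q) (q := p) (by omega) t F (Or.inl htn) hqp) h2

/- ### Upper bound -/

section Upper
variable {M : ℕ} [NeZero M]

lemma star_embed_of_card {k : ℕ} (t : Bool) (c : Sym2 (Fin M) → Bool)
    (hcard : k ≤ (Finset.univ.filter (fun u : Fin M => u ≠ 0 ∧ c s(0, u) = t)).card) :
    ∃ f : StarGraph k ↪g (SimpleGraph.fromRel fun u _ : Fin M => u = 0),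
      ∀ u w, (StarGraph k).Adj u w → c s(f u, f w) = t := by
  set R := Finset.univ.filter (fun u : Fin M => u ≠ 0 ∧ c s(0, u) = t) with hR
  obtain ⟨T, hTsub, hTcard⟩ := Finset.exists_subset_card_eq hcard
  set e := T.orderIsoOfFin hTcard with he
  have hmem : ∀ i : Fin k, (e i : Fin M) ∈ R := fun i => hTsub (e i).2
  have hne0 : ∀ i : Fin k, (e i : Fin M) ≠ 0 := fun i => ((mem_filter.mp (hmem i)).2).1
  have hcol : ∀ i : Fin k, c s(0, (e i : Fin M)) = t := fun i => ((mem_filter.mp (hmem i)).2).2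
  refine ⟨⟨⟨Sum.elim (fun _ => (0 : Fin M)) (fun i => (e i : Fin M)), ?_⟩, ?_⟩, ?_⟩
  · rintro (x | x) (y | y) h
    · exact congrArg Sum.inl (Subsingleton.elim x y)
    · exact absurd (by simpa using h.symm) (hne0 y)
    · exact absurd (by simpa using h) (hne0 x)
    · simp only [Sum.elim_inr] at h
      exact congrArg Sum.inr (e.injective (Subtype.ext h))
  · rintro (x | x) (y | y)
    · constructor
      · intro h; exact absurd h (SimpleGraph.irrefl _)
      · intro h; simp [StarGraph] at h
    · constructor
      · intro _; simp [StarGraph]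
      · intro _
        rw [SimpleGraph.fromRel_adj]
        exact ⟨fun h => (hne0 y) h.symm, Or.inl rfl⟩
    · constructor
      · intro _; simp [StarGraph]
      · intro _
        rw [SimpleGraph.fromRel_adj]
        exact ⟨hne0 x, Or.inr rfl⟩
    · constructor
      · intro h
        rw [SimpleGraph.fromRel_adj] at h
        exact absurd h.2 (not_or.mpr ⟨hne0 x, hne0 y⟩)
      · intro h; simp [StarGraph] at h
  · rintro (u | u) (w | w) hadj
    · simp [StarGraph] at hadj
    · exact hcol w
    · rw [Sym2.eq_swap]; exact hcol u
    · simp [StarGraph] at hadj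

lemma upper (k l : ℕ) (hM : M = k + l) (hk : 1 ≤ k) (hl : 1 ≤ l) :
    ∃ F : SimpleGraph (Fin M), ArrowsInd F (StarGraph k) (StarGraph l) := by
  refine ⟨SimpleGraph.fromRel fun u _ : Fin M => u = 0, fun c => ?_⟩
  set R := Finset.univ.filter (fun u : Fin M => u ≠ 0 ∧ c s(0, u) = true) with hR
  set B := Finset.univ.filter (fun u : Fin M => u ≠ 0 ∧ c s(0, u) = false) with hB
  have hcover : Finset.univ.erase (0 : Fin M) ⊆ R ∪ B := by
    intro u hu
    have hu0 : u ≠ 0 := (mem_erase.mp hu).1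
    rcases Bool.eq_false_or_eq_true (c s(0, u)) with h | h
    · exact mem_union_left _ (mem_filter.mpr ⟨mem_univ _, hu0, h⟩)
    · exact mem_union_right _ (mem_filter.mpr ⟨mem_univ _, hu0, h⟩)
  have hcards : k ≤ R.card ∨ l ≤ B.card := by
    by_contra hcon
    push_neg at hcon
    have h1 := card_le_card hcover
    have h2 := card_union_le R B
    have h3 : (Finset.univ.erase (0 : Fin M)).card = M - 1 := by
      rw [card_erase_of_mem (mem_univ _), card_univ, Fintype.card_fin]
    omega
  rcases hcards with h | h
  · exact Or.inl (star_embed_of_card true c h)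
  · exact Or.inr (star_embed_of_card false c h)
end Upper

/- ### lower bound, on `Fin m` -/

lemma lower_fin (a b m : ℕ) (hm : m ≤ a + b + 1) (F : SimpleGraph (Fin m)) :
    ¬ ArrowsInd F (StarGraph (a+1)) (StarGraph (b+1)) := by
  intro h
  have hNZ : NeZero (a+b+1) := ⟨Nat.succ_ne_zero _⟩
  let e2 : Fin (a+b+1) ≃ ZMod (a+b+1) := Equiv.refl _
  let e : Fin m ↪ ZMod (a+b+1) :=
    (⟨Fin.castLE hm, Fin.castLE_injective hm⟩ : Fin m ↪ Fin (a+b+1)).trans e2.toEmbedding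
  exact main_lower a b (F.map e) (arrows_map e h)

theorem induced_ramsey_star_star (ℓ n : ℕ) (hℓ : 0 < ℓ) (hn : 0 < n) :
    IR (StarGraph ℓ) (StarGraph n) = n + ℓ := by
  obtain ⟨a, rfl⟩ : ∃ a, ℓ = a + 1 := ⟨ℓ - 1, by omega⟩
  obtain ⟨b, rfl⟩ : ∃ b, n = b + 1 := ⟨n - 1, by omega⟩
  have hNZ : NeZero (b + 1 + (a + 1)) := ⟨by omega⟩
  have hup : (b + 1 + (a + 1)) ∈
      {N : ℕ | ∃ F : SimpleGraph (Fin N), ArrowsInd F (StarGraph (a+1)) (StarGraph (b+1))} :=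
    upper (a+1) (b+1) (by omega) (by omega) (by omega)
  apply le_antisymm
  · exact Nat.sInf_le hup
  · apply le_csInf ⟨_, hup⟩
    intro m hm
    by_contra hlt
    push_neg at hlt
    obtain ⟨F, hF⟩ := hm
    exact lower_fin a b m (by omega) F hF
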